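/- If M is a memory state in the centralizer C(F₀) of the finite-memory subgroup, then there exist a unique memory state M' ∈ C(F₀), some S ∈ {I,Z}^{⊗(n-k)}, and some k-qubit Pauli L such that E(M ⊗ S ⊗ L) = I^{⊗n} ⊗ M'. -/

import Mathlib

open scoped BigOperators

/-- The Pauli group on `j` qubits modulo its center, written additively:
an element `(a, b)` at each qubit corresponds to `X^a Z^b`. -/
abbrev Pauli (j : ℕ) := Fin j → (ZMod 2) × (ZMod 2)

/-- The standard symplectic form: two Pauli elements commute iff it vanishes. -/
def omega {j : ℕ} (v w : Pauli j) : ZMod 2 :=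
  ∑ i, ((v i).1 * (w i).2 + (w i).1 * (v i).2)

/-- A quantum convolutional encoder: a symplectic automorphism taking
(memory `m`, ancilla `s = n - k`, information `k`) to (physical `n`, memory `m`). -/
structure Encoder (m s k n : ℕ) where
  toEquiv : (Pauli m × Pauli s × Pauli k) ≃+ (Pauli n × Pauli m)
  symp : ∀ x y : Pauli m × Pauli s × Pauli k,
    omega (toEquiv x).1 (toEquiv y).1 + omega (toEquiv x).2 (toEquiv y).2
      = omega x.1 y.1 + omega x.2.1 y.2.1 + omega x.2.2 y.2.2

/-- `S ∈ {I, Z}^{⊗ s}`: the X-component vanishes. -/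
def isIZ {s : ℕ} (S : Pauli s) : Prop := ∀ i, (S i).1 = 0

/-- Pauli `Z` on the `i`-th qubit, identity elsewhere. -/
def Zi {s : ℕ} (i : Fin s) : Pauli s := fun j => (0, if j = i then 1 else 0)

/-- Pauli `X` on the `i`-th qubit, identity elsewhere. -/
def Xi {k : ℕ} (i : Fin k) : Pauli k := fun j => (if j = i then 1 else 0, 0)

/-- A standard path: at each step the ancilla input is in `{I,Z}^{⊗s}` and the
logical input is the identity. -/
def stdPath {m s k n : ℕ} (E : Encoder m s k n) (f : ℕ → Pauli m) : Prop :=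
  ∀ t, ∃ (S : Pauli s) (P : Pauli n), isIZ S ∧ E.toEquiv (f t, S, 0) = (P, f (t + 1))

/-- A finite-memory state: some standard path from it reaches the identity memory state. -/
def finiteMemory {m s k n : ℕ} (E : Encoder m s k n) (M : Pauli m) : Prop :=
  ∃ f : ℕ → Pauli m, stdPath E f ∧ f 0 = M ∧ ∃ t, f t = 0

/-- Membership in a zero physical-weight cycle. -/
def inZeroCycle {m s k n : ℕ} (E : Encoder m s k n) (M : Pauli m) : Prop :=
  ∃ (p : ℕ) (f : ℕ → Pauli m), 0 < p ∧ f 0 = M ∧ (∀ t, f (t + p) = f t) ∧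
    ∀ t, ∃ (S : Pauli s) (L : Pauli k), isIZ S ∧ E.toEquiv (f t, S, L) = (0, f (t + 1))

/-- Non-catastrophic: every edge of every zero physical-weight cycle has
identity logical label. -/
def nonCatastrophic {m s k n : ℕ} (E : Encoder m s k n) : Prop :=
  ∀ (p : ℕ) (f : ℕ → Pauli m) (S : ℕ → Pauli s) (L : ℕ → Pauli k),
    0 < p → (∀ t, f (t + p) = f t) →
    (∀ t, isIZ (S t) ∧ E.toEquiv (f t, S t, L t) = (0, f (t + 1))) →
    ∀ t, L t = 0


example (j : ℕ) : Module (ZMod 2) (Pauli j) := inferInstance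
example (j : ℕ) : FiniteDimensional (ZMod 2) (Pauli j) := inferInstance

noncomputable def oB (j : ℕ) : LinearMap.BilinForm (ZMod 2) (Pauli j) :=
  LinearMap.mk₂ (ZMod 2) omega
    (by intro x y z; simp only [omega]; rw [← Finset.sum_add_distrib]
        refine Finset.sum_congr rfl fun i _ => ?_
        simp [Pi.add_apply, Prod.fst_add, Prod.snd_add]; ring)
    (by intro c x y; simp only [omega]; rw [smul_eq_mul, Finset.mul_sum]
        refine Finset.sum_congr rfl fun i _ => ?_
        simp [Pi.smul_apply, Prod.smul_fst, Prod.smul_snd, smul_eq_mul]; ring)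
    (by intro x y z; simp only [omega]; rw [← Finset.sum_add_distrib]
        refine Finset.sum_congr rfl fun i _ => ?_
        simp [Pi.add_apply, Prod.fst_add, Prod.snd_add]; ring)
    (by intro c x y; simp only [omega]; rw [smul_eq_mul, Finset.mul_sum]
        refine Finset.sum_congr rfl fun i _ => ?_
        simp [Pi.smul_apply, Prod.smul_fst, Prod.smul_snd, smul_eq_mul]; ring)

@[simp] lemma oB_apply {j : ℕ} (v w : Pauli j) : oB j v w = omega v w := rfl

lemma omega_comm {j : ℕ} (v w : Pauli j) : omega v w = omega w v := by
  simp only [omega]; exact Finset.sum_congr rfl fun i _ => by ring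

lemma omega_Zi {j : ℕ} (v : Pauli j) (i : Fin j) : omega v (Zi i) = (v i).1 := by
  simp only [omega, Zi]
  rw [Finset.sum_eq_single i]
  · simp
  · intro b _ hb; simp [hb]
  · simp

lemma omega_Xi {j : ℕ} (v : Pauli j) (i : Fin j) : omega v (Xi i) = (v i).2 := by
  simp only [omega, Xi]
  rw [Finset.sum_eq_single i]
  · simp
  · intro b _ hb; simp [hb]
  · simp

lemma oB_nondeg (j : ℕ) : (oB j).Nondegenerate := by
  have hL : ∀ v : Pauli j, (∀ w, oB j v w = 0) → v = 0 := by
    intro v hv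
    funext i
    have h1 := hv (Zi i); have h2 := hv (Xi i)
    rw [oB_apply, omega_Zi] at h1
    rw [oB_apply, omega_Xi] at h2
    exact Prod.ext h1 h2
  exact ⟨hL, fun v hv => hL v fun w => by rw [oB_apply, omega_comm, ← oB_apply]; exact hv w⟩

lemma oB_refl (j : ℕ) : (oB j).IsRefl := by
  intro v w h; rw [oB_apply] at h ⊢; rwa [omega_comm]


section Perp
open Module LinearMap.BilinForm
variable {K V V' : Type*} [Field K] [AddCommGroup V] [Module K V] [FiniteDimensional K V]
  [AddCommGroup V'] [Module K V'] [FiniteDimensional K V']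
  (B : LinearMap.BilinForm K V) (B' : LinearMap.BilinForm K V')

lemma orth_sup (A C : Submodule K V) :
    B.orthogonal (A ⊔ C) = B.orthogonal A ⊓ B.orthogonal C := by
  ext x
  simp only [LinearMap.BilinForm.mem_orthogonal_iff, Submodule.mem_inf]
  constructor
  · intro h; exact ⟨fun a ha => h a (Submodule.mem_sup_left ha),
      fun c hc => h c (Submodule.mem_sup_right hc)⟩
  · rintro ⟨h1, h2⟩ y hy
    rcases Submodule.mem_sup.1 hy with ⟨a, ha, c, hc, rfl⟩
    have := h1 a ha; have h2' := h2 c hc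
    rw [map_add, LinearMap.add_apply, this, h2', add_zero]

lemma orth_inf (hr : B.IsRefl) (hn : B.Nondegenerate) (A C : Submodule K V) :
    B.orthogonal (A ⊓ C) = B.orthogonal A ⊔ B.orthogonal C := by
  conv_lhs => rw [← orthogonal_orthogonal hn hr A, ← orthogonal_orthogonal hn hr C]
  rw [← orth_sup, orthogonal_orthogonal hn hr]

lemma orth_comap (e : V ≃ₗ[K] V') (h : ∀ x y, B' (e x) (e y) = B x y) (Y : Submodule K V') :
    B.orthogonal (Y.comap e.toLinearMap) = (B'.orthogonal Y).comap e.toLinearMap := by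
  ext x
  simp only [LinearMap.BilinForm.mem_orthogonal_iff, Submodule.mem_comap,
    LinearMap.BilinForm.IsOrtho]
  constructor
  · intro hx y hy
    have := hx (e.symm y) (by simp [hy])
    rwa [← h, e.apply_symm_apply] at this
  · intro hx y hy
    have := hx (e y) hy
    rwa [LinearEquiv.coe_coe, h] at this

end Perp


section ProdForm
variable {K V W : Type*} [Field K] [AddCommGroup V] [Module K V] [AddCommGroup W] [Module K W]

def pB (B : LinearMap.BilinForm K V) (B' : LinearMap.BilinForm K W) :
    LinearMap.BilinForm K (V × W) :=
  LinearMap.mk₂ K (fun x y => B x.1 y.1 + B' x.2 y.2)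
    (by intro x y z; simp [map_add]; ring)
    (by intro c x y; simp [map_smul]; ring)
    (by intro x y z; simp [map_add]; ring)
    (by intro c x y; simp [map_smul]; ring)

@[simp] lemma pB_apply (B : LinearMap.BilinForm K V) (B' : LinearMap.BilinForm K W)
    (x y : V × W) : pB B B' x y = B x.1 y.1 + B' x.2 y.2 := rfl

lemma pB_refl {B : LinearMap.BilinForm K V} {B' : LinearMap.BilinForm K W}
    (h : ∀ a b, B a b = B b a) (h' : ∀ a b, B' a b = B' b a) :
    ∀ x y : V × W, pB B B' x y = pB B B' y x := by
  intro x y; simp [h, h']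

lemma pB_nondeg {B : LinearMap.BilinForm K V} {B' : LinearMap.BilinForm K W}
    (h : B.Nondegenerate) (h' : B'.Nondegenerate) : (pB B B').Nondegenerate := by
  refine ⟨fun x hx => ?_, fun x hx => ?_⟩
  · have h1 : x.1 = 0 := h.1 x.1 fun y => by simpa using hx (y, 0)
    have h2 : x.2 = 0 := h'.1 x.2 fun y => by simpa using hx (0, y)
    exact Prod.ext h1 h2
  · have h1 : x.1 = 0 := h.2 x.1 fun y => by simpa using hx (y, 0)
    have h2 : x.2 = 0 := h'.2 x.2 fun y => by simpa using hx (0, y)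
    exact Prod.ext h1 h2

lemma orth_prod {B : LinearMap.BilinForm K V} {B' : LinearMap.BilinForm K W}
    (A : Submodule K V) (C : Submodule K W) :
    (pB B B').orthogonal (A.prod C) = (B.orthogonal A).prod (B'.orthogonal C) := by
  ext x
  simp only [LinearMap.BilinForm.mem_orthogonal_iff, Submodule.mem_prod,
    LinearMap.BilinForm.IsOrtho, pB_apply]
  constructor
  · intro hx
    constructor
    · intro a ha
      have := hx (a, 0) ⟨ha, C.zero_mem⟩
      simpa using this
    · intro c hc
      have := hx (0, c) ⟨A.zero_mem, hc⟩
      simpa using this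
  · rintro ⟨h1, h2⟩ y ⟨hy1, hy2⟩
    rw [h1 y.1 hy1, h2 y.2 hy2, add_zero]
end ProdForm

-- ### encoder as linear equivalence
lemma zmod2_cases (c : ZMod 2) : c = 0 ∨ c = 1 := by revert c; decide

noncomputable def Elin {m s k n : ℕ} (E : Encoder m s k n) :
    (Pauli m × Pauli s × Pauli k) ≃ₗ[ZMod 2] (Pauli n × Pauli m) :=
  { E.toEquiv with
    map_smul' := by
      intro c x
      rcases zmod2_cases c with h | h <;> subst h
      · simp only [zero_smul, RingHom.id_apply]; exact E.toEquiv.map_zero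
      · simp only [one_smul, RingHom.id_apply] }

@[simp] lemma Elin_apply {m s k n : ℕ} (E : Encoder m s k n) (x) :
    Elin E x = E.toEquiv x := rfl

@[simp] lemma Elin_symm_apply {m s k n : ℕ} (E : Encoder m s k n) (y) :
    E.toEquiv ((Elin E).symm y) = y := by
  exact (Elin E).apply_symm_apply y

-- ### isIZ as a submodule
def IZsub (s : ℕ) : Submodule (ZMod 2) (Pauli s) where
  carrier := {S | isIZ S}
  add_mem' := by
    intro a b ha hb i
    simp only [Pi.add_apply, Prod.fst_add, ha i, hb i, add_zero]
  zero_mem' := fun i => rfl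
  smul_mem' := by
    intro c x hx i
    simp only [Pi.smul_apply, Prod.smul_fst, smul_eq_mul, hx i, mul_zero]

lemma mem_IZsub {s : ℕ} {S : Pauli s} : S ∈ IZsub s ↔ isIZ S := Iff.rfl

lemma isIZ_Zi {s : ℕ} (i : Fin s) : isIZ (Zi i) := fun _ => rfl

lemma omega_isIZ {s : ℕ} {a b : Pauli s} (ha : isIZ a) (hb : isIZ b) : omega a b = 0 := by
  simp only [omega]
  refine Finset.sum_eq_zero fun i _ => ?_
  rw [ha i, hb i, zero_mul, zero_mul, add_zero]

-- ### paths
lemma stdPath_zero {m s k n : ℕ} (E : Encoder m s k n) : stdPath E (fun _ => (0 : Pauli m)) := by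
  intro t
  refine ⟨0, 0, fun i => rfl, ?_⟩
  show E.toEquiv (0, 0, 0) = (0, 0)
  have : ((0 : Pauli m), (0 : Pauli s), (0 : Pauli k)) = (0 : Pauli m × Pauli s × Pauli k) := rfl
  rw [this, E.toEquiv.map_zero]; rfl

lemma stdPath_add {m s k n : ℕ} {E : Encoder m s k n} {f g : ℕ → Pauli m}
    (hf : stdPath E f) (hg : stdPath E g) : stdPath E (fun t => f t + g t) := by
  intro t
  obtain ⟨S, P, hS, hP⟩ := hf t
  obtain ⟨S', P', hS', hP'⟩ := hg t
  refine ⟨S + S', P + P', (IZsub s).add_mem hS hS', ?_⟩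
  have : ((f t + g t : Pauli m), S + S', (0 : Pauli k)) = (f t, S, (0 : Pauli k)) + (g t, S', 0) := by
    show _ = (f t + g t, S + S', 0 + 0)
    rw [add_zero]
  rw [this, E.toEquiv.map_add, hP, hP']
  show (P + P', f (t+1) + g (t+1)) = _
  rfl

lemma finiteMemory_pad {m s k n : ℕ} {E : Encoder m s k n} {N : Pauli m}
    (h : finiteMemory E N) :
    ∃ (f : ℕ → Pauli m) (T : ℕ), stdPath E f ∧ f 0 = N ∧ ∀ u, T ≤ u → f u = 0 := by
  obtain ⟨f, hf, hf0, T, hT⟩ := h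
  refine ⟨fun u => if u < T then f u else 0, T, ?_, ?_, ?_⟩
  · intro t
    by_cases ht : t < T
    · obtain ⟨S, P, hS, hP⟩ := hf t
      refine ⟨S, P, hS, ?_⟩
      simp only [if_pos ht]
      rw [hP]
      by_cases ht1 : t + 1 < T
      · rw [if_pos ht1]
      · have : t + 1 = T := by omega
        rw [if_neg ht1, this, hT]
    · simp only [if_neg ht, if_neg (by omega : ¬ t + 1 < T)]
      exact stdPath_zero E t
  · by_cases h0 : 0 < T
    · simp [if_pos h0, hf0]
    · have : T = 0 := by omega
      simp only [if_neg (by omega : ¬ (0:ℕ) < T)]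
      rw [← hf0, ← hT, this]
  · intro u hu
    simp [if_neg (by omega : ¬ u < T)]

-- ### finite-memory submodule
def Fsub {m s k n : ℕ} (E : Encoder m s k n) : Submodule (ZMod 2) (Pauli m) where
  carrier := {N | finiteMemory E N}
  zero_mem' := ⟨fun _ => 0, stdPath_zero E, rfl, 0, rfl⟩
  add_mem' := by
    intro a b ha hb
    obtain ⟨f, T, hf, hf0, hfT⟩ := finiteMemory_pad ha
    obtain ⟨g, T', hg, hg0, hgT⟩ := finiteMemory_pad hb
    refine ⟨fun t => f t + g t, stdPath_add hf hg, by show f 0 + g 0 = a + b; rw [hf0, hg0], max T T', ?_⟩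
    show f (max T T') + g (max T T') = 0
    rw [hfT _ (le_max_left T T'), hgT _ (le_max_right T T'), add_zero]
  smul_mem' := by
    intro c x hx
    rcases zmod2_cases c with h | h <;> subst h
    · rw [zero_smul]
      exact ⟨fun _ => 0, stdPath_zero E, rfl, 0, rfl⟩
    · rwa [one_smul]

lemma mem_Fsub {m s k n : ℕ} {E : Encoder m s k n} {N : Pauli m} :
    N ∈ Fsub E ↔ finiteMemory E N := Iff.rfl

lemma finiteMemory_prepend {m s k n : ℕ} {E : Encoder m s k n} {A N : Pauli m}
    {S : Pauli s} {Q : Pauli n} (hS : isIZ S) (hE : E.toEquiv (A, S, 0) = (Q, N))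
    (hN : finiteMemory E N) : finiteMemory E A := by
  obtain ⟨f, hf, hf0, T, hT⟩ := hN
  refine ⟨fun u => Nat.casesOn u A f, ?_, rfl, T + 1, hT⟩
  intro t
  cases t with
  | zero =>
    refine ⟨S, Q, hS, ?_⟩
    show E.toEquiv (A, S, 0) = (Q, f 0)
    rw [hE, hf0]
  | succ t => exact hf t

-- ### the memory transition map and Fitting's lemma
noncomputable def glin {m s k n : ℕ} (E : Encoder m s k n) : Pauli m →ₗ[ZMod 2] Pauli m :=
  (LinearMap.snd (ZMod 2) (Pauli n) (Pauli m)) ∘ₗ ((Elin E).toLinearMap ∘ₗ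
    (LinearMap.inl (ZMod 2) (Pauli m) (Pauli s × Pauli k)))

lemma glin_apply {m s k n : ℕ} (E : Encoder m s k n) (A : Pauli m) :
    glin E A = (E.toEquiv (A, 0, 0)).2 := rfl

lemma ker_glin_pow_le_Fsub {m s k n : ℕ} (E : Encoder m s k n) (a : ℕ) :
    LinearMap.ker (glin E ^ a) ≤ Fsub E := by
  intro x hx
  rw [LinearMap.mem_ker] at hx
  refine ⟨fun t => (glin E ^ t) x, ?_, by simp, a, hx⟩
  intro t
  refine ⟨0, (E.toEquiv ((glin E ^ t) x, 0, 0)).1, fun _ => rfl, ?_⟩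
  show E.toEquiv ((glin E ^ t) x, 0, 0) = (_, (glin E ^ (t+1)) x)
  have h2 : (glin E ^ (t+1)) x = glin E ((glin E ^ t) x) := by
    rw [pow_succ']; rfl
  rw [h2, glin_apply]

lemma fitting {m s k n : ℕ} (E : Encoder m s k n) :
    Fsub E ⊔ LinearMap.range (glin E) = ⊤ := by
  set d := Module.finrank (ZMod 2) (Pauli m) with hd
  set g := glin E
  have hker : ∀ b, d ≤ b → LinearMap.ker (g ^ b) = LinearMap.ker (g ^ d) := fun b hb =>
    Module.End.ker_pow_eq_ker_pow_finrank_of_le hb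
  have hdisj : LinearMap.ker (g ^ (d+1)) ⊓ LinearMap.range (g ^ (d+1)) = ⊥ := by
    rw [eq_bot_iff]
    rintro x ⟨hk, y, rfl⟩
    have hk' : (g ^ (d+1)) ((g ^ (d+1)) y) = 0 := hk
    have : y ∈ LinearMap.ker (g ^ ((d+1) + (d+1))) := by
      rw [LinearMap.mem_ker, pow_add]
      exact hk'
    rw [hker _ (by omega), ← hker (d+1) (by omega), LinearMap.mem_ker] at this
    simp [this]
  have hsum : LinearMap.ker (g ^ (d+1)) ⊔ LinearMap.range (g ^ (d+1)) = ⊤ := by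
    apply Submodule.eq_top_of_finrank_eq
    have h1 := Submodule.finrank_sup_add_finrank_inf_eq
      (LinearMap.ker (g ^ (d+1))) (LinearMap.range (g ^ (d+1)))
    have h2 := LinearMap.finrank_range_add_finrank_ker (g ^ (d+1))
    rw [hdisj, finrank_bot, add_zero] at h1
    omega
  have hle : LinearMap.ker (g ^ (d+1)) ⊔ LinearMap.range (g ^ (d+1))
      ≤ Fsub E ⊔ LinearMap.range g := by
    apply sup_le_sup (ker_glin_pow_le_Fsub E (d+1))
    rintro x ⟨y, rfl⟩
    exact ⟨(g ^ d) y, by rw [pow_succ']; rfl⟩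
  rw [← top_le_iff, ← hsum]
  exact hle


lemma symp' {m s k n : ℕ} (E : Encoder m s k n) :
    ∀ x y, (pB (oB n) (oB m)) (Elin E x) (Elin E y) = (pB (oB m) (pB (oB s) (oB k))) x y := by
  intro x y
  simp only [pB_apply, oB_apply, Elin_apply]
  rw [E.symp x y, add_assoc]

lemma orth_bot {K V : Type*} [Field K] [AddCommGroup V] [Module K V]
    (B : LinearMap.BilinForm K V) : B.orthogonal ⊥ = ⊤ := by
  rw [eq_top_iff]
  intro x _
  rw [LinearMap.BilinForm.mem_orthogonal_iff]
  intro y hy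
  rw [Submodule.mem_bot] at hy
  subst hy
  exact LinearMap.BilinForm.isOrtho_zero_left x

lemma orth_IZ (s : ℕ) : (oB s).orthogonal (IZsub s) = IZsub s := by
  ext x
  rw [LinearMap.BilinForm.mem_orthogonal_iff]
  constructor
  · intro hx i
    have := hx (Zi i) (isIZ_Zi i)
    rw [oB_apply, omega_comm, omega_Zi] at this
    exact this
  · intro hx y hy
    rw [oB_apply]
    exact omega_isIZ hy hx

@[simp] lemma omega_zero_left {j : ℕ} (v : Pauli j) : omega 0 v = 0 := by
  simp [omega]

@[simp] lemma omega_zero_right {j : ℕ} (v : Pauli j) : omega v 0 = 0 := by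
  simp [omega]

set_option maxHeartbeats 1000000 in
theorem successor_of_centralizer_state {m s k n : ℕ} (E : Encoder m s k n)
    (M : Pauli m) (hM : ∀ N : Pauli m, finiteMemory E N → omega M N = 0) :
    ∃! M' : Pauli m, (∀ N : Pauli m, finiteMemory E N → omega M' N = 0) ∧
      ∃ (S : Pauli s) (L : Pauli k), isIZ S ∧
        E.toEquiv (M, S, L) = (0, M') := by
  classical
  have hmR : (oB m).IsRefl := by
    intro x y hxy
    rw [oB_apply, omega_comm] at hxy
    exact hxy
  have hsR : (oB s).IsRefl := by
    intro x y hxy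
    rw [oB_apply, omega_comm] at hxy
    exact hxy
  have hkR : (oB k).IsRefl := by
    intro x y hxy
    rw [oB_apply, omega_comm] at hxy
    exact hxy
  have hnR : (oB n).IsRefl := by
    intro x y hxy
    rw [oB_apply, omega_comm] at hxy
    exact hxy
  have oB_symm : ∀ (j : ℕ) (a b : Pauli j), oB j a b = oB j b a := by
    intro j a b
    rw [oB_apply, oB_apply, omega_comm]
  have hinSymm : ∀ x y, pB (oB m) (pB (oB s) (oB k)) x y = pB (oB m) (pB (oB s) (oB k)) y x :=
    pB_refl (oB_symm m) (pB_refl (oB_symm s) (oB_symm k))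
  have hinR : (pB (oB m) (pB (oB s) (oB k))).IsRefl := by
    intro x y hxy
    rw [hinSymm] at hxy
    exact hxy
  have houtSymm : ∀ x y, pB (oB n) (oB m) x y = pB (oB n) (oB m) y x :=
    pB_refl (oB_symm n) (oB_symm m)
  have houtR : (pB (oB n) (oB m)).IsRefl := by
    intro x y hxy
    rw [houtSymm] at hxy
    exact hxy
  have hinN : (pB (oB m) (pB (oB s) (oB k))).Nondegenerate :=
    pB_nondeg (oB_nondeg m) (pB_nondeg (oB_nondeg s) (oB_nondeg k))
  have houtN : (pB (oB n) (oB m)).Nondegenerate := pB_nondeg (oB_nondeg n) (oB_nondeg m)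
  -- Step 1: the projection of the good subspace, and its orthogonal
  have claim1 : (oB m).orthogonal
      (Submodule.map (LinearMap.fst (ZMod 2) (Pauli m) (Pauli s × Pauli k))
        (((⊤ : Submodule (ZMod 2) (Pauli m)).prod
            ((IZsub s).prod (⊤ : Submodule (ZMod 2) (Pauli k)))) ⊓
          (Submodule.comap (Elin E).toLinearMap ((⊥ : Submodule (ZMod 2) (Pauli n)).prod
            (⊤ : Submodule (ZMod 2) (Pauli m)))))) ≤ Fsub E := by
    intro x hx
    have hx3 : ((x, ((0 : Pauli s), (0 : Pauli k))) : Pauli m × Pauli s × Pauli k) ∈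
        (pB (oB m) (pB (oB s) (oB k))).orthogonal
          ((((⊤ : Submodule (ZMod 2) (Pauli m)).prod
            ((IZsub s).prod (⊤ : Submodule (ZMod 2) (Pauli k)))) ⊓
          (Submodule.comap (Elin E).toLinearMap ((⊥ : Submodule (ZMod 2) (Pauli n)).prod
            (⊤ : Submodule (ZMod 2) (Pauli m)))))) := by
      rw [LinearMap.BilinForm.mem_orthogonal_iff]
      intro u hu
      have hu1 : u.1 ∈ Submodule.map (LinearMap.fst (ZMod 2) (Pauli m) (Pauli s × Pauli k))
          ((((⊤ : Submodule (ZMod 2) (Pauli m)).prod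
            ((IZsub s).prod (⊤ : Submodule (ZMod 2) (Pauli k)))) ⊓
          (Submodule.comap (Elin E).toLinearMap ((⊥ : Submodule (ZMod 2) (Pauli n)).prod
            (⊤ : Submodule (ZMod 2) (Pauli m)))))) := Submodule.mem_map_of_mem hu
      have h0 := LinearMap.BilinForm.mem_orthogonal_iff.1 hx u.1 hu1
      show (oB m) u.1 x + ((oB s) u.2.1 0 + (oB k) u.2.2 0) = 0
      rw [map_zero, map_zero, add_zero, add_zero]
      exact h0
    have hU : (pB (oB m) (pB (oB s) (oB k))).orthogonal
          ((((⊤ : Submodule (ZMod 2) (Pauli m)).prod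
            ((IZsub s).prod (⊤ : Submodule (ZMod 2) (Pauli k)))) ⊓
          (Submodule.comap (Elin E).toLinearMap ((⊥ : Submodule (ZMod 2) (Pauli n)).prod
            (⊤ : Submodule (ZMod 2) (Pauli m))))))
        = ((⊥ : Submodule (ZMod 2) (Pauli m)).prod
            ((IZsub s).prod (⊥ : Submodule (ZMod 2) (Pauli k)))) ⊔
          Submodule.comap (Elin E).toLinearMap ((⊤ : Submodule (ZMod 2) (Pauli n)).prod
            (⊥ : Submodule (ZMod 2) (Pauli m))) := by
      rw [orth_inf _ hinR hinN]
      congr 1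
      · rw [orth_prod, orth_prod, orth_IZ,
          LinearMap.BilinForm.orthogonal_top_eq_bot (oB_nondeg m),
          LinearMap.BilinForm.orthogonal_top_eq_bot (oB_nondeg k)]
      · rw [orth_comap _ (pB (oB n) (oB m)) (Elin E) (symp' E), orth_prod, orth_bot,
          LinearMap.BilinForm.orthogonal_top_eq_bot (oB_nondeg m)]
    rw [hU] at hx3
    rcases Submodule.mem_sup.1 hx3 with ⟨b, hb, a, ha, hab⟩
    rw [Submodule.mem_prod, Submodule.mem_prod] at hb
    obtain ⟨hb1, hb21, hb22⟩ := hb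
    rw [Submodule.mem_bot] at hb1
    rw [Submodule.mem_bot] at hb22
    rw [Submodule.mem_comap, Submodule.mem_prod] at ha
    have haE : (E.toEquiv a).2 = 0 := Submodule.mem_bot _ |>.1 ha.2
    have hab1 : b.1 + a.1 = x := congrArg Prod.fst hab
    have hab21 : b.2.1 + a.2.1 = 0 := congrArg (fun z => z.2.1) hab
    have hab22 : b.2.2 + a.2.2 = 0 := congrArg (fun z => z.2.2) hab
    have ha1 : a.1 = x := by rw [hb1, zero_add] at hab1; exact hab1
    have ha21 : a.2.1 ∈ IZsub s := by
      have : a.2.1 = -b.2.1 := eq_neg_of_add_eq_zero_right hab21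
      rw [this]
      exact (IZsub s).neg_mem hb21
    have ha22 : a.2.2 = 0 := by rw [hb22, zero_add] at hab22; exact hab22
    have haeq : ((x, a.2.1, (0 : Pauli k)) : Pauli m × Pauli s × Pauli k) = a := by
      rw [← ha1, ← ha22]
    have hedge : E.toEquiv (x, a.2.1, 0) = ((E.toEquiv a).1, (0 : Pauli m)) := by
      rw [haeq, ← haE]
    exact finiteMemory_prepend ha21 hedge ((Fsub E).zero_mem)
  -- Step 2: M is the first component of an element of U
  have hMmem : M ∈ Submodule.map (LinearMap.fst (ZMod 2) (Pauli m) (Pauli s × Pauli k))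
      ((((⊤ : Submodule (ZMod 2) (Pauli m)).prod
            ((IZsub s).prod (⊤ : Submodule (ZMod 2) (Pauli k)))) ⊓
          (Submodule.comap (Elin E).toLinearMap ((⊥ : Submodule (ZMod 2) (Pauli n)).prod
            (⊤ : Submodule (ZMod 2) (Pauli m)))))) := by
    rw [← LinearMap.BilinForm.orthogonal_orthogonal (oB_nondeg m) hmR
        (Submodule.map (LinearMap.fst (ZMod 2) (Pauli m) (Pauli s × Pauli k))
          ((((⊤ : Submodule (ZMod 2) (Pauli m)).prod
            ((IZsub s).prod (⊤ : Submodule (ZMod 2) (Pauli k)))) ⊓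
          (Submodule.comap (Elin E).toLinearMap ((⊥ : Submodule (ZMod 2) (Pauli n)).prod
            (⊤ : Submodule (ZMod 2) (Pauli m)))))))]
    rw [LinearMap.BilinForm.mem_orthogonal_iff]
    intro y hy
    show (oB m) y M = 0
    rw [oB_apply, omega_comm]
    exact hM y (claim1 hy)
  obtain ⟨u, hu, hufst⟩ := Submodule.mem_map.1 hMmem
  have hufst' : u.1 = M := hufst
  obtain ⟨huX, huW⟩ := Submodule.mem_inf.1 hu
  rw [Submodule.mem_prod, Submodule.mem_prod] at huX
  have hS : u.2.1 ∈ IZsub s := huX.2.1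
  rw [Submodule.mem_comap, Submodule.mem_prod] at huW
  have hfst : (E.toEquiv u).1 = 0 := Submodule.mem_bot _ |>.1 huW.1
  -- Step 3: the adjustment space
  have claim2 : ∀ D ∈ (oB m).orthogonal
      (Submodule.map (LinearMap.snd (ZMod 2) (Pauli n) (Pauli m))
        (Submodule.comap (Elin E).symm.toLinearMap
          ((⊤ : Submodule (ZMod 2) (Pauli m)).prod
            ((IZsub s).prod (⊥ : Submodule (ZMod 2) (Pauli k)))))),
      ∃ S₀ L₀, isIZ S₀ ∧ E.toEquiv ((0 : Pauli m), S₀, L₀) = ((0 : Pauli n), D) := by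
    intro D hD
    have h1 : (((0 : Pauli n), D) : Pauli n × Pauli m) ∈
        (pB (oB n) (oB m)).orthogonal (Submodule.comap (Elin E).symm.toLinearMap
          ((⊤ : Submodule (ZMod 2) (Pauli m)).prod
            ((IZsub s).prod (⊥ : Submodule (ZMod 2) (Pauli k))))) := by
      rw [LinearMap.BilinForm.mem_orthogonal_iff]
      intro y hy
      show (oB n) y.1 0 + (oB m) y.2 D = 0
      rw [map_zero, zero_add]
      exact LinearMap.BilinForm.mem_orthogonal_iff.1 hD y.2 (Submodule.mem_map_of_mem hy)
    have hsymm' : ∀ x y, (pB (oB m) (pB (oB s) (oB k))) ((Elin E).symm x) ((Elin E).symm y)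
        = (pB (oB n) (oB m)) x y := by
      intro x y
      rw [← symp' E ((Elin E).symm x) ((Elin E).symm y),
        (Elin E).apply_symm_apply, (Elin E).apply_symm_apply]
    rw [orth_comap (pB (oB n) (oB m)) (pB (oB m) (pB (oB s) (oB k))) (Elin E).symm hsymm'
        ((⊤ : Submodule (ZMod 2) (Pauli m)).prod
            ((IZsub s).prod (⊥ : Submodule (ZMod 2) (Pauli k))))] at h1
    rw [Submodule.mem_comap] at h1
    rw [orth_prod, orth_prod, orth_IZ,
      LinearMap.BilinForm.orthogonal_top_eq_bot (oB_nondeg m), orth_bot] at h1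
    rw [Submodule.mem_prod, Submodule.mem_prod] at h1
    obtain ⟨hw1, hw21, -⟩ := h1
    rw [Submodule.mem_bot, LinearEquiv.coe_coe] at hw1
    refine ⟨((Elin E).symm ((0 : Pauli n), D)).2.1, ((Elin E).symm ((0 : Pauli n), D)).2.2,
      hw21, ?_⟩
    have hw : ((0 : Pauli m), ((Elin E).symm ((0 : Pauli n), D)).2.1,
        ((Elin E).symm ((0 : Pauli n), D)).2.2) = (Elin E).symm ((0 : Pauli n), D) := by
      rw [← hw1]
    rw [hw]
    exact Elin_symm_apply E _
  -- Step 4: the second component is orthogonal to F ⊓ Y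
  have claim3 : (E.toEquiv u).2 ∈ (oB m).orthogonal (Fsub E ⊓
      (Submodule.map (LinearMap.snd (ZMod 2) (Pauli n) (Pauli m))
        (Submodule.comap (Elin E).symm.toLinearMap
          ((⊤ : Submodule (ZMod 2) (Pauli m)).prod
            ((IZsub s).prod (⊥ : Submodule (ZMod 2) (Pauli k))))))) := by
    rw [LinearMap.BilinForm.mem_orthogonal_iff]
    rintro N ⟨hNF, hNY⟩
    obtain ⟨y, hy, hyN⟩ := Submodule.mem_map.1 hNY
    have hyN' : y.2 = N := hyN
    rw [Submodule.mem_comap, Submodule.mem_prod, Submodule.mem_prod] at hy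
    obtain ⟨-, hw21, hw22⟩ := hy
    rw [Submodule.mem_bot, LinearEquiv.coe_coe] at hw22
    rw [LinearEquiv.coe_coe] at hw21
    have hEw : E.toEquiv ((Elin E).symm y) = y := Elin_symm_apply E y
    have hwprod : (((Elin E).symm y).1, ((Elin E).symm y).2.1, (0 : Pauli k))
        = (Elin E).symm y := by rw [← hw22]
    have hwA : finiteMemory E ((Elin E).symm y).1 := by
      refine finiteMemory_prepend hw21 (show E.toEquiv (((Elin E).symm y).1,
        ((Elin E).symm y).2.1, 0) = (y.1, y.2) from ?_) ?_
      · rw [hwprod, hEw]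
      · rw [hyN']; exact hNF
    have hsymp := E.symp u ((Elin E).symm y)
    rw [hEw, hfst] at hsymp
    rw [omega_zero_left, zero_add] at hsymp
    rw [hufst'] at hsymp
    rw [hM _ hwA, hw22, omega_zero_right, omega_isIZ hS hw21] at hsymp
    show (oB m) N (E.toEquiv u).2 = 0
    rw [oB_apply, omega_comm, ← hyN']
    rw [hsymp]
    norm_num
  rw [orth_inf _ hmR (oB_nondeg m)] at claim3
  rcases Submodule.mem_sup.1 claim3 with ⟨h, hh, d, hd, hhd⟩
  obtain ⟨S₀, L₀, hS₀, hd'⟩ := claim2 d hd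
  have hdd : d + d = (0 : Pauli m) := by
    have h2 : (2 : ZMod 2) • d = d + d := two_smul _ d
    rw [show (2 : ZMod 2) = 0 by decide, zero_smul] at h2
    exact h2.symm
  have hMfinal : E.toEquiv (M, u.2.1 + S₀, u.2.2 + L₀) = ((0 : Pauli n), h) := by
    have hu_eq : ((M, u.2.1 + S₀, u.2.2 + L₀) : Pauli m × Pauli s × Pauli k)
        = u + ((0 : Pauli m), S₀, L₀) := by
      show _ = (u.1 + 0, u.2.1 + S₀, u.2.2 + L₀)
      rw [add_zero, hufst']
    rw [hu_eq, E.toEquiv.map_add, hd']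
    have hEu : E.toEquiv u = ((0 : Pauli n), (E.toEquiv u).2) := by
      rw [← hfst]
    rw [hEu]
    show ((0 : Pauli n) + 0, (E.toEquiv u).2 + d) = ((0 : Pauli n), h)
    rw [add_zero, ← hhd, add_assoc, hdd, add_zero]
  have hhF : ∀ N : Pauli m, finiteMemory E N → omega h N = 0 := by
    intro N hN
    have h0 := LinearMap.BilinForm.mem_orthogonal_iff.1 hh N hN
    rw [omega_comm]
    exact h0
  refine ⟨h, ⟨hhF, u.2.1 + S₀, u.2.2 + L₀, (IZsub s).add_mem hS hS₀, hMfinal⟩, ?_⟩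
  rintro y ⟨hyF, Sy, Ly, hSy, hEy⟩
  have hdiff : E.toEquiv ((0 : Pauli m), Sy - (u.2.1 + S₀), Ly - (u.2.2 + L₀))
      = ((0 : Pauli n), y - h) := by
    have heq : ((0 : Pauli m), Sy - (u.2.1 + S₀), Ly - (u.2.2 + L₀)) =
        ((M, Sy, Ly) : Pauli m × Pauli s × Pauli k) - (M, u.2.1 + S₀, u.2.2 + L₀) := by
      show _ = (M - M, Sy - (u.2.1 + S₀), Ly - (u.2.2 + L₀))
      rw [sub_self]
    rw [heq, E.toEquiv.map_sub, hEy, hMfinal]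
    show ((0 : Pauli n) - 0, y - h) = _
    rw [sub_zero]
  have hperp : ∀ w' : Pauli m, omega (y - h) w' = 0 := by
    intro w'
    have hw' : w' ∈ Fsub E ⊔ LinearMap.range (glin E) := by
      rw [fitting E]; trivial
    rcases Submodule.mem_sup.1 hw' with ⟨N, hN, v, hv, hNv⟩
    obtain ⟨A, rfl⟩ := hv
    have hNpart : omega (y - h) N = 0 := by
      have heq : (oB m) (y - h) N = (oB m) y N - (oB m) h N := by
        rw [map_sub, LinearMap.sub_apply]
      rw [oB_apply, oB_apply, oB_apply] at heq
      rw [heq, hyF N hN, hhF N hN, sub_zero]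
    have hgpart : omega (y - h) (glin E A) = 0 := by
      have hsymp := E.symp ((0 : Pauli m), Sy - (u.2.1 + S₀), Ly - (u.2.2 + L₀))
        ((A, 0, 0) : Pauli m × Pauli s × Pauli k)
      rw [hdiff] at hsymp
      rw [omega_zero_left, omega_zero_left, zero_add, zero_add,
        omega_zero_right, omega_zero_right, add_zero] at hsymp
      rw [glin_apply]
      exact hsymp
    have heq2 : (oB m) (y - h) (N + glin E A) =
        (oB m) (y - h) N + (oB m) (y - h) (glin E A) := map_add _ _ _
    rw [oB_apply, oB_apply, oB_apply] at heq2
    rw [← hNv, heq2, hNpart, hgpart, add_zero]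
  have hyh : y - h = 0 := by
    apply (oB_nondeg m).1
    intro w'
    rw [oB_apply]
    exact hperp w'
  exact sub_eq_zero.1 hyh
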